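/- arXiv:2010.01198 — 3 statements merged into one kernel-verified Lean document; each statement's English description precedes it below -/
import Mathlib

section
/- Let m₁, m₂, k₁, k₂ > 0 and let ω > 0 be such that m₂ω² ≠ k₂. Then there exists a real number φ satisfying the dispersion relation (2k₁(1 − cos φ) + k₂ − m₁ω²)·(k₂ − m₂ω²) = k₂² of the linear undamped mass-in-mass chain if and only if 0 ≤ m₁ω² + (k₂ m₂ ω²)/(k₂ − m₂ω²) ≤ 4k₁. Equivalently, the frequency ω supports a propagating traveling wave with real wavenumber exactly when the quantity f(ω) = m₁ω² + (k₂ m₂ ω²)/(k₂ − m₂ω²) lies in the interval [0, 4k₁]; frequencies with f(ω) ∉ [0, 4k₁] lie in a band gap. -/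
/-- for `m₂ω² ≠ k₂`, a real wavenumber-phase `φ` satisfying the
dispersion relation exists iff `m₁ω² + k₂m₂ω²/(k₂ − m₂ω²) ∈ [0, 4k₁]`. -/
theorem dispersion_solvable_iff_in_pass_band
    (m₁ m₂ k₁ k₂ : ℝ) (hm₁ : 0 < m₁) (hm₂ : 0 < m₂) (hk₁ : 0 < k₁) (hk₂ : 0 < k₂)
    (ω : ℝ) (hω : 0 < ω) (hres : m₂ * ω ^ 2 ≠ k₂) :
    (∃ φ : ℝ,
        (2 * k₁ * (1 - Real.cos φ) + k₂ - m₁ * ω ^ 2) * (k₂ - m₂ * ω ^ 2) = k₂ ^ 2)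
    ↔
    (0 ≤ m₁ * ω ^ 2 + (k₂ * m₂ * ω ^ 2) / (k₂ - m₂ * ω ^ 2)
      ∧ m₁ * ω ^ 2 + (k₂ * m₂ * ω ^ 2) / (k₂ - m₂ * ω ^ 2) ≤ 4 * k₁) := by
  have hd : k₂ - m₂ * ω ^ 2 ≠ 0 := fun h => hres (by linarith)
  set f := m₁ * ω ^ 2 + (k₂ * m₂ * ω ^ 2) / (k₂ - m₂ * ω ^ 2) with hf
  have key : ∀ φ : ℝ,
      ((2 * k₁ * (1 - Real.cos φ) + k₂ - m₁ * ω ^ 2) * (k₂ - m₂ * ω ^ 2) = k₂ ^ 2)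
      ↔ Real.cos φ = 1 - f / (2 * k₁) := by
    intro φ
    rw [hf]
    constructor
    · intro h
      field_simp
      rw [mul_comm m₂ (ω ^ 2)] at hd
      field_simp
      nlinarith [h]
    · intro h
      rw [h]
      field_simp
      rw [mul_comm m₂ (ω ^ 2)] at hd
      field_simp
      ring
  constructor
  · rintro ⟨φ, h⟩
    have hc := (key φ).mp h
    have h1 := Real.neg_one_le_cos φ
    have h2 := Real.cos_le_one φ
    rw [hc] at h1 h2
    have heq : f / (2 * k₁) * (2 * k₁) = f := div_mul_cancel₀ f (by positivity)
    have hq0 : 0 ≤ f / (2 * k₁) := by linarith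
    have hq2 : f / (2 * k₁) ≤ 2 := by linarith
    constructor
    · have := mul_nonneg hq0 (by linarith : (0:ℝ) ≤ 2 * k₁)
      linarith [heq ▸ this]
    · have := mul_le_mul_of_nonneg_right hq2 (by linarith : (0:ℝ) ≤ 2 * k₁)
      rw [heq] at this
      linarith
  · rintro ⟨h0, h4⟩
    have hmem : 1 - f / (2 * k₁) ∈ Set.Icc (-1 : ℝ) 1 := by
      constructor
      · have : f / (2 * k₁) ≤ 2 := by
          rw [div_le_iff₀ (by linarith)]; linarith
        linarith
      · have : 0 ≤ f / (2 * k₁) := div_nonneg h0 (by linarith)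
        linarith
    obtain ⟨φ, _, hφ⟩ := Real.surjOn_cos hmem
    exact ⟨φ, (key φ).mpr hφ⟩
end

section
/- Let m₁, m₂, k₁, k₂ > 0. Then there exists ε > 0 such that for every ω > 0 with 0 < |m₂ω² − k₂| < ε, there is no real number φ satisfying the dispersion relation (2k₁(1 − cos φ) + k₂ − m₁ω²)·(k₂ − m₂ω²) = k₂² of the linear undamped mass-in-mass chain. In other words, the chain possesses a band gap containing frequencies arbitrarily close to (on both sides of) the local resonance frequency ω₂ = √(k₂/m₂) of the internal resonator. -/
/-- there is a band gap around the internal-resonator local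
resonance frequency: for frequencies with `m₂ω²` close to (but distinct from)
`k₂`, no real `φ` satisfies the dispersion relation. -/
theorem band_gap_near_local_resonance
    (m₁ m₂ k₁ k₂ : ℝ) (hm₁ : 0 < m₁) (hm₂ : 0 < m₂) (hk₁ : 0 < k₁) (hk₂ : 0 < k₂) :
    ∃ ε > 0, ∀ ω : ℝ, 0 < ω →
      0 < |m₂ * ω ^ 2 - k₂| → |m₂ * ω ^ 2 - k₂| < ε →
      ¬ ∃ φ : ℝ,
        (2 * k₁ * (1 - Real.cos φ) + k₂ - m₁ * ω ^ 2) * (k₂ - m₂ * ω ^ 2) = k₂ ^ 2 := by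
  set M : ℝ := 4 * k₁ + k₂ + 2 * m₁ * k₂ / m₂ with hM
  have hMpos : 0 < M := by positivity
  refine ⟨min k₂ (k₂ ^ 2 / M), lt_min hk₂ (by positivity), ?_⟩
  rintro ω hω hpos hlt ⟨φ, hdisp⟩
  have hlt1 : |m₂ * ω ^ 2 - k₂| < k₂ := lt_of_lt_of_le hlt (min_le_left _ _)
  have hlt2 : |m₂ * ω ^ 2 - k₂| < k₂ ^ 2 / M := lt_of_lt_of_le hlt (min_le_right _ _)
  -- bound on ω²
  have hω2 : m₂ * ω ^ 2 < 2 * k₂ := by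
    have := abs_lt.1 hlt1
    linarith [this.2]
  have hω2' : ω ^ 2 ≤ 2 * k₂ / m₂ := by
    rw [le_div_iff₀ hm₂]
    nlinarith
  have hcos := Real.neg_one_le_cos φ
  have hcos' := Real.cos_le_one φ
  have hA : |2 * k₁ * (1 - Real.cos φ) + k₂ - m₁ * ω ^ 2| ≤ M := by
    rw [abs_le]
    constructor
    · have : m₁ * ω ^ 2 ≤ m₁ * (2 * k₂ / m₂) := by
        apply mul_le_mul_of_nonneg_left hω2' hm₁.le
      rw [hM]
      have h2 : 2 * m₁ * k₂ / m₂ = m₁ * (2 * k₂ / m₂) := by ring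
      nlinarith
    · have hd : 0 ≤ 2 * m₁ * k₂ / m₂ := by positivity
      rw [hM]
      nlinarith [mul_pos hm₁ (pow_pos hω 2)]
  have key : |(2 * k₁ * (1 - Real.cos φ) + k₂ - m₁ * ω ^ 2) * (k₂ - m₂ * ω ^ 2)| < k₂ ^ 2 := by
    rw [abs_mul]
    calc |2 * k₁ * (1 - Real.cos φ) + k₂ - m₁ * ω ^ 2| * |k₂ - m₂ * ω ^ 2|
        ≤ M * |k₂ - m₂ * ω ^ 2| := by
          apply mul_le_mul_of_nonneg_right hA (abs_nonneg _)
      _ < M * (k₂ ^ 2 / M) := by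
          apply mul_lt_mul_of_pos_left _ hMpos
          rwa [abs_sub_comm]
      _ = k₂ ^ 2 := by field_simp
  rw [hdisp] at key
  simp [abs_of_pos (by positivity : (0:ℝ) < k₂ ^ 2)] at key
end

section
/- Let m₁, m₂, k₁, k₂ > 0 and let ω > 0 satisfy m₂ω² > k₂ together with k₂ m₂ ω² > m₁ω²·(m₂ω² − k₂) (i.e., the dispersion quantity m₁ω² + (k₂ m₂ ω²)/(k₂ − m₂ω²) is negative, so ω lies in a band gap). Then there exist γ > 0 and amplitudes A₁, A₂, not both zero, such that the spatially decaying standing-wave functions u₁(j)(t) = A₁·e^{−γ j}·cos(ωt) and u₂(j)(t) = A₂·e^{−γ j}·cos(ωt) satisfy, for all j ∈ ℤ and t ∈ ℝ, the linear undamped mass-in-mass chain equations m₁·u₁(j)''(t) + k₁(2u₁(j)(t) − u₁(j+1)(t) − u₁(j−1)(t)) + k₂(u₁(j)(t) − u₂(j)(t)) = 0 and m₂·u₂(j)''(t) + k₂(u₂(j)(t) − u₁(j)(t)) = 0. In particular, within this band gap the chain response at frequency ω decays exponentially with the unit index j rather than propagating. -/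
/-- Second derivative of a scaled cosine. -/
lemma second_deriv_scaled_cos (C ω : ℝ) (t : ℝ) :
    deriv (deriv (fun s : ℝ => C * Real.cos (ω * s))) t
      = -(C * ω ^ 2) * Real.cos (ω * t) := by
  have h1 : ∀ x : ℝ, HasDerivAt (fun s : ℝ => C * Real.cos (ω * s))
      (-(C * ω) * Real.sin (ω * x)) x := by
    intro x
    have h : HasDerivAt (fun s : ℝ => C * Real.cos (ω * s))
        (C * (-Real.sin (ω * x) * (ω * 1))) x := (((Real.hasDerivAt_cos (ω * x)).comp x
      ((hasDerivAt_id x).const_mul ω))).const_mul C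
    convert h using 1
    ring
  have hD : deriv (fun s : ℝ => C * Real.cos (ω * s))
      = fun x => -(C * ω) * Real.sin (ω * x) := funext fun x => (h1 x).deriv
  rw [hD]
  have h2 : HasDerivAt (fun x : ℝ => -(C * ω) * Real.sin (ω * x))
      (-(C * ω) * (Real.cos (ω * t) * (ω * 1))) t :=
    (((Real.hasDerivAt_sin (ω * t)).comp t
      ((hasDerivAt_id t).const_mul ω))).const_mul (-(C * ω))
  rw [h2.deriv]; ring

/-- within the band gap where the dispersion quantity is negative,
there exists a nontrivial exponentially decaying (evanescent) standing-wave
solution of the linear undamped mass-in-mass chain. -/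
theorem evanescent_wave_in_band_gap
    (m₁ m₂ k₁ k₂ : ℝ) (hm₁ : 0 < m₁) (hm₂ : 0 < m₂) (hk₁ : 0 < k₁) (hk₂ : 0 < k₂)
    (ω : ℝ) (hω : 0 < ω)
    (hgap₁ : m₂ * ω ^ 2 > k₂)
    (hgap₂ : k₂ * m₂ * ω ^ 2 > m₁ * ω ^ 2 * (m₂ * ω ^ 2 - k₂)) :
    ∃ γ > 0, ∃ A₁ A₂ : ℝ, ¬(A₁ = 0 ∧ A₂ = 0) ∧
      ∀ j : ℤ, ∀ t : ℝ,
        (m₁ * deriv (deriv (fun s : ℝ => A₁ * Real.exp (-γ * (j : ℝ)) * Real.cos (ω * s))) t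
          + k₁ * (2 * (A₁ * Real.exp (-γ * (j : ℝ)) * Real.cos (ω * t))
              - A₁ * Real.exp (-γ * ((j : ℝ) + 1)) * Real.cos (ω * t)
              - A₁ * Real.exp (-γ * ((j : ℝ) - 1)) * Real.cos (ω * t))
          + k₂ * (A₁ * Real.exp (-γ * (j : ℝ)) * Real.cos (ω * t)
              - A₂ * Real.exp (-γ * (j : ℝ)) * Real.cos (ω * t)) = 0)
        ∧
        (m₂ * deriv (deriv (fun s : ℝ => A₂ * Real.exp (-γ * (j : ℝ)) * Real.cos (ω * s))) t
          + k₂ * (A₂ * Real.exp (-γ * (j : ℝ)) * Real.cos (ω * t)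
              - A₁ * Real.exp (-γ * (j : ℝ)) * Real.cos (ω * t)) = 0) := by
  -- the positive quantity P, the cosh value b = 2 + P, and the root r of r² - b r + 1 = 0
  set P : ℝ := (k₂ * m₂ * ω ^ 2 - m₁ * ω ^ 2 * (m₂ * ω ^ 2 - k₂)) / (k₁ * (m₂ * ω ^ 2 - k₂))
    with hPdef
  have hdenpos : 0 < k₁ * (m₂ * ω ^ 2 - k₂) := by
    have : 0 < m₂ * ω ^ 2 - k₂ := by linarith
    positivity
  have hP : 0 < P := div_pos (by linarith) hdenpos
  set b : ℝ := 2 + P with hbdef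
  have hb : 2 < b := by linarith
  set s : ℝ := Real.sqrt (b ^ 2 - 4) with hsdef
  have hs2 : s ^ 2 = b ^ 2 - 4 := Real.sq_sqrt (by nlinarith)
  have hs0 : 0 ≤ s := Real.sqrt_nonneg _
  set r : ℝ := (b + s) / 2 with hrdef
  have hr1 : 1 < r := by
    rw [hrdef]; linarith
  have hquad : r ^ 2 - b * r + 1 = 0 := by
    rw [hrdef]; nlinarith [hs2]
  refine ⟨Real.log r, Real.log_pos hr1, k₂ - m₂ * ω ^ 2, k₂, ?_, ?_⟩
  · rintro ⟨-, h⟩; exact absurd h (ne_of_gt hk₂)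
  intro j t
  have hexp : Real.exp (Real.log r) = r := Real.exp_log (by linarith)
  have hexpneg : Real.exp (-Real.log r) = b - r := by
    rw [Real.exp_neg, hexp]
    have hmul : r * (b - r) = 1 := by nlinarith [hquad]
    field_simp
    nlinarith [hquad]
  -- scalar dispersion identities
  have key1 : m₁ * (-(k₂ - m₂ * ω ^ 2) * ω ^ 2)
      + k₁ * (2 * (k₂ - m₂ * ω ^ 2) - (k₂ - m₂ * ω ^ 2) * Real.exp (-Real.log r)
          - (k₂ - m₂ * ω ^ 2) * Real.exp (Real.log r))
      + k₂ * ((k₂ - m₂ * ω ^ 2) - k₂) = 0 := by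
    rw [hexp, hexpneg]
    have hne : k₁ * (m₂ * ω ^ 2 - k₂) ≠ 0 := ne_of_gt hdenpos
    have hne' : m₂ * ω ^ 2 - k₂ ≠ 0 := by linarith
    have hk₁' : k₁ ≠ 0 := ne_of_gt hk₁
    rw [hbdef, hPdef]
    field_simp
    ring
  have key2 : m₂ * (-k₂ * ω ^ 2) + k₂ * (k₂ - (k₂ - m₂ * ω ^ 2)) = 0 := by ring
  -- exponent splitting
  have e1 : Real.exp (-Real.log r * ((j : ℝ) + 1))
      = Real.exp (-Real.log r * (j : ℝ)) * Real.exp (-Real.log r) := by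
    rw [← Real.exp_add]; ring_nf
  have e2 : Real.exp (-Real.log r * ((j : ℝ) - 1))
      = Real.exp (-Real.log r * (j : ℝ)) * Real.exp (Real.log r) := by
    rw [← Real.exp_add]; ring_nf
  constructor
  · rw [second_deriv_scaled_cos, e1, e2]
    linear_combination (Real.exp (-Real.log r * (j : ℝ)) * Real.cos (ω * t)) * key1
  · rw [second_deriv_scaled_cos]
    linear_combination (Real.exp (-Real.log r * (j : ℝ)) * Real.cos (ω * t)) * key2
end
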